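/- Let P(a) = A·a² + B·a + C where A = μ + I_eβ_e − I_e(μ+ν)g'(I_e)β'_e/β_e, B = (μ + I_eβ_e)² − I_e²(μ+ν)g'(I_e)β'_e, and C = I_e²(μ+ν)β_e² + I_e μ(μ+ν)β_e. If μ, ν, I_e, β_e, g'(I_e) > 0 and β'_e < 0, then A, B, C > 0 and hence P(a) > 0 for all a > 0. Consequently the Routh–Hurwitz condition c₁c₂ > c₀ holds for the exponentially-fading-kernel model, and the endemic equilibrium is locally asymptotically stable for every a > 0. -/
import Mathlib

/-- The Routh–Hurwitz quadratic `P(a) = A a² + B a + C` for the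
exponentially-fading-kernel model has `A, B, C > 0`, hence `P(a) > 0` for all
`a > 0`: the endemic equilibrium is locally asymptotically stable for every
`a > 0`. -/
theorem routh_hurwitz_exponential_kernel
    (μ ν Ie βe βe' ge' : ℝ)
    (hμ : 0 < μ) (hν : 0 < ν)
    (hIe : Ie ∈ Set.Ioo (0:ℝ) 1)
    (hβe : 0 < βe) (hβe' : βe' < 0) (hge' : 0 < ge') :
    0 < μ + Ie * βe - Ie * (μ + ν) * ge' * βe' / βe ∧
    0 < (μ + Ie * βe) ^ 2 - Ie ^ 2 * (μ + ν) * ge' * βe' ∧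
    0 < Ie ^ 2 * (μ + ν) * βe ^ 2 + Ie * μ * (μ + ν) * βe ∧
    ∀ a : ℝ, 0 < a →
      0 < (μ + Ie * βe - Ie * (μ + ν) * ge' * βe' / βe) * a ^ 2 +
          ((μ + Ie * βe) ^ 2 - Ie ^ 2 * (μ + ν) * ge' * βe') * a +
          (Ie ^ 2 * (μ + ν) * βe ^ 2 + Ie * μ * (μ + ν) * βe) := by
  obtain ⟨hI0, hI1⟩ := hIe
  have hμν : 0 < μ + ν := by linarith
  have hA : 0 < μ + Ie * βe - Ie * (μ + ν) * ge' * βe' / βe := by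
    have h1 : Ie * (μ + ν) * ge' * βe' / βe < 0 :=
      div_neg_of_neg_of_pos (by
        have := mul_pos (mul_pos (mul_pos hI0 hμν) hge') hβe
        nlinarith) hβe
    nlinarith [mul_pos hI0 hβe]
  have hB : 0 < (μ + Ie * βe) ^ 2 - Ie ^ 2 * (μ + ν) * ge' * βe' := by
    nlinarith [mul_pos hI0 hβe, sq_nonneg Ie, mul_pos (mul_pos (mul_pos (mul_pos hI0 hI0) hμν) hge') (neg_pos.mpr hβe')]
  have hC : 0 < Ie ^ 2 * (μ + ν) * βe ^ 2 + Ie * μ * (μ + ν) * βe := by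
    nlinarith [mul_pos hI0 hβe, mul_pos (mul_pos hI0 hμ) (mul_pos hμν hβe)]
  refine ⟨hA, hB, hC, fun a ha => ?_⟩
  have := mul_pos hA (mul_pos ha ha)
  nlinarith [mul_pos hB ha]
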